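/- arXiv:2111.04350 — 3 statements merged into one kernel-verified Lean document; each statement's English description precedes it below -/
import Mathlib

section
/- Hardy's inequality: for p ∈ (0,∞), q ∈ [1,∞), and a nonnegative measurable function φ on (0,∞), one has (∫₀^∞ [∫₀^t t^{-1/p} φ(s) ds/s]^q dt/t)^{1/q} ≤ p (∫₀^∞ [s^{-1/p} φ(s)]^q ds/s)^{1/q}. -/
open MeasureTheory ENNReal Set

noncomputable section

/-- Weighted Hölder: `(∫ f·w)^q ≤ (∫ f^q·w) * (∫ w)^(q-1)` for `q ≥ 1`. -/
lemma holder_weight {α : Type*} [MeasurableSpace α] (μ : Measure α) {f w : α → ℝ≥0∞}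
    (hf : AEMeasurable f μ) (hw : AEMeasurable w μ) {q : ℝ} (hq : 1 ≤ q) :
    (∫⁻ x, f x * w x ∂μ) ^ q ≤ (∫⁻ x, f x ^ q * w x ∂μ) * (∫⁻ x, w x ∂μ) ^ (q - 1) := by
  have hq0 : (0:ℝ) < q := lt_of_lt_of_le one_pos hq
  have key := ENNReal.lintegral_mul_norm_pow_le (μ := μ)
      (f := fun x => f x ^ q * w x) (g := w) ((hf.pow_const _).mul hw) hw
      (p := 1/q) (q := 1 - 1/q) (by positivity)
      (by rw [sub_nonneg]; exact (div_le_one hq0).2 hq) (by ring)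
  have heq : ∀ x, (f x ^ q * w x) ^ (1/q) * w x ^ (1 - 1/q) = f x * w x := by
    intro x
    rw [ENNReal.mul_rpow_of_nonneg _ _ (by positivity), ← ENNReal.rpow_mul,
      mul_one_div_cancel hq0.ne', ENNReal.rpow_one, mul_assoc,
      ← ENNReal.rpow_add_of_nonneg _ _ (by positivity)
        (by rw [sub_nonneg]; exact (div_le_one hq0).2 hq)]
    rw [add_sub_cancel, ENNReal.rpow_one]
  simp_rw [heq] at key
  calc (∫⁻ x, f x * w x ∂μ) ^ q
      ≤ ((∫⁻ x, f x ^ q * w x ∂μ) ^ (1/q) * (∫⁻ x, w x ∂μ) ^ (1 - 1/q)) ^ q :=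
        ENNReal.rpow_le_rpow key hq0.le
    _ = (∫⁻ x, f x ^ q * w x ∂μ) * (∫⁻ x, w x ∂μ) ^ (q - 1) := by
        rw [ENNReal.mul_rpow_of_nonneg _ _ hq0.le, ← ENNReal.rpow_mul, ← ENNReal.rpow_mul,
          one_div_mul_cancel hq0.ne', ENNReal.rpow_one]
        congr 2
        field_simp

/-- Tonelli swap for the region `0 < s < t`. -/
lemma swap_Ioo (H : ℝ → ℝ → ℝ≥0∞) (hH : Measurable (Function.uncurry H)) :
    ∫⁻ t in Ioi (0:ℝ), ∫⁻ s in Ioo (0:ℝ) t, H s t = ∫⁻ s in Ioi (0:ℝ), ∫⁻ t in Ioi s, H s t := by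
  have hset : MeasurableSet {x : ℝ × ℝ | 0 < x.1 ∧ x.1 < x.2} :=
    (measurableSet_lt measurable_const measurable_fst).inter
      (measurableSet_lt measurable_fst measurable_snd)
  set K : ℝ → ℝ → ℝ≥0∞ := fun s t => if 0 < s ∧ s < t then H s t else 0 with hKdef
  have hKm : Measurable (Function.uncurry K) := by
    have : Function.uncurry K = fun x : ℝ × ℝ =>
        if 0 < x.1 ∧ x.1 < x.2 then Function.uncurry H x else 0 := rfl
    rw [this]
    exact Measurable.ite hset hH measurable_const
  have h1 : ∫⁻ t in Ioi (0:ℝ), ∫⁻ s in Ioo (0:ℝ) t, H s t = ∫⁻ t, ∫⁻ s, K s t := by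
    rw [← lintegral_indicator measurableSet_Ioi]
    congr 1; ext t
    by_cases ht : 0 < t
    · rw [Set.indicator_of_mem (mem_Ioi.2 ht), ← lintegral_indicator measurableSet_Ioo]
      congr 1; ext s
      simp [Set.indicator_apply, Set.mem_Ioo, hKdef]
    · rw [Set.indicator_of_notMem (by simpa using ht)]
      have : ∀ s, K s t = 0 := fun s =>
        if_neg (fun h => ht (h.1.trans h.2))
      simp [this]
  have h2 : ∫⁻ s in Ioi (0:ℝ), ∫⁻ t in Ioi s, H s t = ∫⁻ s, ∫⁻ t, K s t := by
    rw [← lintegral_indicator measurableSet_Ioi]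
    congr 1; ext s
    by_cases hs : 0 < s
    · rw [Set.indicator_of_mem (mem_Ioi.2 hs), ← lintegral_indicator measurableSet_Ioi]
      congr 1; ext t
      simp [Set.indicator_apply, Set.mem_Ioi, hKdef, hs]
    · rw [Set.indicator_of_notMem (by simpa using hs)]
      have : ∀ t, K s t = 0 := fun t => if_neg (fun h => hs h.1)
      simp [this]
  rw [h1, h2]
  exact lintegral_lintegral_swap ((hKm.comp measurable_swap).aemeasurable)

/-- `∫_s^∞ t^a dt/… = ofReal (-s^(a+1)/(a+1))` as a lintegral. -/
lemma lint_Ioi {a s : ℝ} (ha : a < -1) (hs : 0 < s) :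
    ∫⁻ t in Ioi s, ENNReal.ofReal (t ^ a) = ENNReal.ofReal (-s ^ (a+1) / (a+1)) := by
  rw [← ofReal_integral_eq_lintegral_ofReal (integrableOn_Ioi_rpow_of_lt ha hs) ?_,
    integral_Ioi_rpow_of_lt ha hs]
  filter_upwards [ae_restrict_mem measurableSet_Ioi] with x hx
  exact Real.rpow_nonneg (hs.trans hx).le _

lemma lint_Ioo {a t : ℝ} (ha : -1 < a) (ht : 0 < t) :
    ∫⁻ s in Ioo (0:ℝ) t, ENNReal.ofReal (s ^ a) = ENNReal.ofReal (t ^ (a+1) / (a+1)) := by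
  have hint : IntegrableOn (fun x : ℝ => x ^ a) (Ioo 0 t) := (intervalIntegral.integrableOn_Ioo_rpow_iff ht).2 ha
  rw [← ofReal_integral_eq_lintegral_ofReal hint ?_]
  · congr 1
    rw [← integral_Ioc_eq_integral_Ioo, ← intervalIntegral.integral_of_le ht.le,
      integral_rpow (Or.inl ha), Real.zero_rpow (by linarith), sub_zero]
  · filter_upwards [ae_restrict_mem measurableSet_Ioo] with x hx
    exact Real.rpow_nonneg hx.1.le _

/-- Hardy's inequality. For `p ∈ (0,∞)`, `q ∈ [1,∞)` and a nonnegative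
measurable `φ` on `(0,∞)`,
`(∫₀^∞ [∫₀^t t^{-1/p} φ(s) ds/s]^q dt/t)^{1/q} ≤ p (∫₀^∞ [s^{-1/p} φ(s)]^q ds/s)^{1/q}`. -/
theorem hardy_inequality (p q : ℝ) (hp : 0 < p) (hq : 1 ≤ q)
    (φ : ℝ → ℝ≥0∞) (hφ : Measurable φ) :
    (∫⁻ t in Set.Ioi (0 : ℝ),
        (∫⁻ s in Set.Ioo (0 : ℝ) t,
            ENNReal.ofReal (t ^ (-(1 / p))) * φ s * ENNReal.ofReal s⁻¹) ^ q *
          ENNReal.ofReal t⁻¹) ^ (1 / q) ≤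
      ENNReal.ofReal p *
        (∫⁻ s in Set.Ioi (0 : ℝ),
            (ENNReal.ofReal (s ^ (-(1 / p))) * φ s) ^ q * ENNReal.ofReal s⁻¹) ^ (1 / q) := by
  have hq0 : (0:ℝ) < q := one_pos.trans_le hq
  have hφinv : Measurable fun s : ℝ => φ s * ENNReal.ofReal s⁻¹ :=
    hφ.mul (ENNReal.measurable_ofReal.comp measurable_inv)
  have hms : ∀ c : ℝ, Measurable fun s : ℝ => ENNReal.ofReal (s ^ c) := fun c =>
    ENNReal.measurable_ofReal.comp (measurable_id.pow_const c)
  have hrw : ∀ {s : ℝ}, 0 < s → ∀ b : ℝ,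
      (ENNReal.ofReal (s ^ b)) ^ q = ENNReal.ofReal (s ^ (b * q)) := by
    intro s hs b
    rw [ENNReal.ofReal_rpow_of_pos (Real.rpow_pos_of_pos hs b), ← Real.rpow_mul hs.le]
  have hmul : ∀ {s : ℝ}, 0 < s → ∀ b c : ℝ,
      ENNReal.ofReal (s ^ b) * ENNReal.ofReal (s ^ c) = ENNReal.ofReal (s ^ (b + c)) := by
    intro s hs b c
    rw [← ENNReal.ofReal_mul (Real.rpow_nonneg hs.le _), ← Real.rpow_add hs]
  have hinv : ∀ s : ℝ, ENNReal.ofReal s⁻¹ = ENNReal.ofReal (s ^ (-1 : ℝ)) := fun s => by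
    rw [Real.rpow_neg_one]
  set G : ℝ → ℝ≥0∞ := fun t => ∫⁻ s in Ioo (0:ℝ) t, φ s * ENNReal.ofReal s⁻¹ with hGdef
  set A := ∫⁻ s in Set.Ioi (0:ℝ),
      (ENNReal.ofReal (s ^ (-(1/p))) * φ s) ^ q * ENNReal.ofReal s⁻¹ with hAdef
  have hA' : A = ∫⁻ s in Ioi (0:ℝ), φ s ^ q * ENNReal.ofReal (s ^ (-(q/p) - 1)) := by
    refine setLIntegral_congr_fun measurableSet_Ioi (fun s hs => ?_)
    calc (ENNReal.ofReal (s ^ (-(1/p))) * φ s) ^ q * ENNReal.ofReal s⁻¹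
        = φ s ^ q * ((ENNReal.ofReal (s ^ (-(1/p)))) ^ q * ENNReal.ofReal (s ^ (-1:ℝ))) := by
          rw [ENNReal.mul_rpow_of_nonneg _ _ hq0.le, hinv]; ring
      _ = φ s ^ q * ENNReal.ofReal (s ^ (-(q/p) - 1)) := by
          rw [hrw hs, hmul hs, show -(1/p) * q + (-1:ℝ) = -(q/p) - 1 by ring]
  have hstep1 : ∀ t : ℝ,
      (∫⁻ s in Set.Ioo (0:ℝ) t,
        ENNReal.ofReal (t ^ (-(1/p))) * φ s * ENNReal.ofReal s⁻¹)
        = ENNReal.ofReal (t ^ (-(1/p))) * G t := by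
    intro t
    simp_rw [mul_assoc]
    exact lintegral_const_mul _ hφinv
  -- pointwise Hölder bound
  have hpt : ∀ t ∈ Ioi (0:ℝ),
      (ENNReal.ofReal (t ^ (-(1/p))) * G t) ^ q * ENNReal.ofReal t⁻¹ ≤
        ENNReal.ofReal (p ^ (q-1)) *
          ∫⁻ s in Ioo (0:ℝ) t, ENNReal.ofReal (t ^ (-(1/p) - 1)) *
            (φ s ^ q * ENNReal.ofReal (s ^ ((1/p) * (1-q) - 1))) := by
    intro t ht
    rw [mem_Ioi] at ht
    have hGeq : G t = ∫⁻ s in Ioo (0:ℝ) t,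
        (φ s * ENNReal.ofReal (s ^ (-(1/p)))) * ENNReal.ofReal (s ^ (1/p - 1)) := by
      refine setLIntegral_congr_fun measurableSet_Ioo (fun s hs => ?_)
      rw [mul_assoc, hmul hs.1, show -(1/p) + (1/p - 1) = (-1:ℝ) by ring, ← hinv]
    have hW : ∫⁻ s in Ioo (0:ℝ) t, ENNReal.ofReal (s ^ (1/p - 1))
        = ENNReal.ofReal (p * t ^ (1/p)) := by
      rw [lint_Ioo (by linarith [one_div_pos.mpr hp] : (-1:ℝ) < 1/p - 1) ht,
        show (1/p - 1 + 1) = 1/p by ring]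
      congr 1
      field_simp
    have hHolder := holder_weight (volume.restrict (Ioo (0:ℝ) t))
      (f := fun s => φ s * ENNReal.ofReal (s ^ (-(1/p))))
      (w := fun s => ENNReal.ofReal (s ^ (1/p - 1)))
      ((hφ.mul (hms _)).aemeasurable) ((hms _).aemeasurable) hq
    rw [← hGeq, hW] at hHolder
    have hI2 : (∫⁻ s in Ioo (0:ℝ) t,
        (φ s * ENNReal.ofReal (s ^ (-(1/p)))) ^ q * ENNReal.ofReal (s ^ (1/p - 1)))
        = ∫⁻ s in Ioo (0:ℝ) t, φ s ^ q * ENNReal.ofReal (s ^ ((1/p) * (1-q) - 1)) := by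
      refine setLIntegral_congr_fun measurableSet_Ioo (fun s hs => ?_)
      rw [ENNReal.mul_rpow_of_nonneg _ _ hq0.le, hrw hs.1, mul_assoc, hmul hs.1,
        show -(1/p) * q + (1/p - 1) = (1/p) * (1-q) - 1 by ring]
    rw [hI2] at hHolder
    have key : (ENNReal.ofReal (t ^ (-(1/p)))) ^ q * ENNReal.ofReal t⁻¹ *
        (ENNReal.ofReal (p * t ^ (1/p))) ^ (q-1)
        = ENNReal.ofReal (p ^ (q-1)) * ENNReal.ofReal (t ^ (-(1/p) - 1)) := by
      rw [hrw ht, hinv t,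
        ENNReal.ofReal_rpow_of_pos (by positivity : (0:ℝ) < p * t ^ (1/p)),
        Real.mul_rpow hp.le (Real.rpow_nonneg ht.le _),
        ← Real.rpow_mul ht.le,
        ENNReal.ofReal_mul (by positivity : (0:ℝ) ≤ p ^ (q-1))]
      calc ENNReal.ofReal (t ^ (-(1/p) * q)) * ENNReal.ofReal (t ^ (-1:ℝ)) *
            (ENNReal.ofReal (p ^ (q-1)) * ENNReal.ofReal (t ^ (1/p * (q-1))))
          = ENNReal.ofReal (p ^ (q-1)) * (ENNReal.ofReal (t ^ (-(1/p) * q)) *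
              ENNReal.ofReal (t ^ (-1:ℝ)) * ENNReal.ofReal (t ^ (1/p * (q-1)))) := by ring
        _ = ENNReal.ofReal (p ^ (q-1)) * ENNReal.ofReal (t ^ (-(1/p) - 1)) := by
            rw [hmul ht, hmul ht, show -(1/p) * q + -1 + 1/p * (q-1) = -(1/p) - 1 by ring]
    calc (ENNReal.ofReal (t ^ (-(1/p))) * G t) ^ q * ENNReal.ofReal t⁻¹
        = (ENNReal.ofReal (t ^ (-(1/p)))) ^ q * G t ^ q * ENNReal.ofReal t⁻¹ := by
          rw [ENNReal.mul_rpow_of_nonneg _ _ hq0.le]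
      _ ≤ (ENNReal.ofReal (t ^ (-(1/p)))) ^ q *
            ((∫⁻ s in Ioo (0:ℝ) t, φ s ^ q * ENNReal.ofReal (s ^ ((1/p) * (1-q) - 1))) *
              (ENNReal.ofReal (p * t ^ (1/p))) ^ (q-1)) * ENNReal.ofReal t⁻¹ := by
          gcongr
      _ = ((ENNReal.ofReal (t ^ (-(1/p)))) ^ q * ENNReal.ofReal t⁻¹ *
            (ENNReal.ofReal (p * t ^ (1/p))) ^ (q-1)) *
            (∫⁻ s in Ioo (0:ℝ) t, φ s ^ q * ENNReal.ofReal (s ^ ((1/p) * (1-q) - 1))) := by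
          ring
      _ = ENNReal.ofReal (p ^ (q-1)) * (ENNReal.ofReal (t ^ (-(1/p) - 1)) *
            ∫⁻ s in Ioo (0:ℝ) t, φ s ^ q * ENNReal.ofReal (s ^ ((1/p) * (1-q) - 1))) := by
          rw [key, mul_assoc]
      _ = ENNReal.ofReal (p ^ (q-1)) *
            ∫⁻ s in Ioo (0:ℝ) t, ENNReal.ofReal (t ^ (-(1/p) - 1)) *
              (φ s ^ q * ENNReal.ofReal (s ^ ((1/p) * (1-q) - 1))) := by
          rw [lintegral_const_mul' _ _ ENNReal.ofReal_ne_top]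
  -- inner integral after Fubini
  have hIn : ∀ s ∈ Ioi (0:ℝ),
      (∫⁻ t in Ioi s, ENNReal.ofReal (t ^ (-(1/p) - 1)) *
        (φ s ^ q * ENNReal.ofReal (s ^ ((1/p) * (1-q) - 1))))
      = ENNReal.ofReal p * (φ s ^ q * ENNReal.ofReal (s ^ (-(q/p) - 1))) := by
    intro s hs
    rw [mem_Ioi] at hs
    rw [lintegral_mul_const _ (hms _),
      lint_Ioi (by linarith [one_div_pos.mpr hp] : -(1/p) - 1 < (-1:ℝ)) hs,
      show -(1/p) - 1 + 1 = -(1/p) by ring]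
    have hval : -s ^ (-(1/p)) / (-(1/p)) = p * s ^ (-(1/p)) := by
      rw [neg_div_neg_eq]; field_simp
    rw [hval, ENNReal.ofReal_mul hp.le]
    calc ENNReal.ofReal p * ENNReal.ofReal (s ^ (-(1/p))) *
          (φ s ^ q * ENNReal.ofReal (s ^ ((1/p) * (1-q) - 1)))
        = ENNReal.ofReal p * (φ s ^ q * (ENNReal.ofReal (s ^ ((1/p) * (1-q) - 1)) *
            ENNReal.ofReal (s ^ (-(1/p))))) := by ring
      _ = ENNReal.ofReal p * (φ s ^ q * ENNReal.ofReal (s ^ (-(q/p) - 1))) := by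
          rw [hmul hs, show (1/p) * (1-q) - 1 + -(1/p) = -(q/p) - 1 by ring]
  -- Fubini
  have hmeasH : Measurable (Function.uncurry fun s t : ℝ =>
      ENNReal.ofReal (t ^ (-(1/p) - 1)) *
        (φ s ^ q * ENNReal.ofReal (s ^ ((1/p) * (1-q) - 1)))) := by
    exact ((hms _).comp measurable_snd).mul
      (((hφ.comp measurable_fst).pow_const q).mul ((hms _).comp measurable_fst))
  have hsw := swap_Ioo (fun s t => ENNReal.ofReal (t ^ (-(1/p) - 1)) *
      (φ s ^ q * ENNReal.ofReal (s ^ ((1/p) * (1-q) - 1)))) hmeasH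
  -- main estimate
  suffices h : (∫⁻ t in Set.Ioi (0:ℝ),
      (∫⁻ s in Set.Ioo (0:ℝ) t,
        ENNReal.ofReal (t ^ (-(1/p))) * φ s * ENNReal.ofReal s⁻¹) ^ q *
        ENNReal.ofReal t⁻¹) ≤ ENNReal.ofReal p ^ q * A by
    refine le_trans (ENNReal.rpow_le_rpow h (by positivity)) (le_of_eq ?_)
    rw [ENNReal.mul_rpow_of_nonneg _ _ (by positivity), ← ENNReal.rpow_mul,
      mul_one_div_cancel hq0.ne', ENNReal.rpow_one]
  calc ∫⁻ t in Set.Ioi (0:ℝ),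
        (∫⁻ s in Set.Ioo (0:ℝ) t,
          ENNReal.ofReal (t ^ (-(1/p))) * φ s * ENNReal.ofReal s⁻¹) ^ q * ENNReal.ofReal t⁻¹
      = ∫⁻ t in Ioi (0:ℝ), (ENNReal.ofReal (t ^ (-(1/p))) * G t) ^ q * ENNReal.ofReal t⁻¹ := by
        refine setLIntegral_congr_fun measurableSet_Ioi
          (fun t _ => ?_)
        rw [hstep1 t]
    _ ≤ ∫⁻ t in Ioi (0:ℝ), ENNReal.ofReal (p ^ (q-1)) *
          ∫⁻ s in Ioo (0:ℝ) t, ENNReal.ofReal (t ^ (-(1/p) - 1)) *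
            (φ s ^ q * ENNReal.ofReal (s ^ ((1/p) * (1-q) - 1))) := by
        refine lintegral_mono_ae ?_
        filter_upwards [ae_restrict_mem measurableSet_Ioi] with t ht
        exact hpt t ht
    _ = ENNReal.ofReal (p ^ (q-1)) * ∫⁻ t in Ioi (0:ℝ),
          ∫⁻ s in Ioo (0:ℝ) t, ENNReal.ofReal (t ^ (-(1/p) - 1)) *
            (φ s ^ q * ENNReal.ofReal (s ^ ((1/p) * (1-q) - 1))) := by
        rw [lintegral_const_mul' _ _ ENNReal.ofReal_ne_top]
    _ = ENNReal.ofReal (p ^ (q-1)) * ∫⁻ s in Ioi (0:ℝ),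
          ∫⁻ t in Ioi s, ENNReal.ofReal (t ^ (-(1/p) - 1)) *
            (φ s ^ q * ENNReal.ofReal (s ^ ((1/p) * (1-q) - 1))) := by
        rw [hsw]
    _ = ENNReal.ofReal (p ^ (q-1)) * ∫⁻ s in Ioi (0:ℝ),
          ENNReal.ofReal p * (φ s ^ q * ENNReal.ofReal (s ^ (-(q/p) - 1))) := by
        rw [setLIntegral_congr_fun measurableSet_Ioi
          (fun s hs => hIn s hs)]
    _ = ENNReal.ofReal (p ^ (q-1)) * (ENNReal.ofReal p * A) := by
        rw [lintegral_const_mul' _ _ ENNReal.ofReal_ne_top, ← hA']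
    _ = ENNReal.ofReal p ^ q * A := by
        have hpow : (ENNReal.ofReal p) ^ (q-1) * ENNReal.ofReal p = (ENNReal.ofReal p) ^ q := by
          nth_rewrite 2 [← ENNReal.rpow_one (ENNReal.ofReal p)]
          rw [← ENNReal.rpow_add_of_nonneg _ _ (by linarith) zero_le_one, sub_add_cancel]
        rw [← mul_assoc, ← ENNReal.ofReal_rpow_of_pos hp, hpow]
end
end

section
/- In the Calderón–Zygmund decomposition at height α of f ∈ L¹(ℝⁿ), the good part g (equal to f off the cubes and to the cube averages on each cube Q_k) satisfies ‖g‖_{L^p}^p ≤ (1 + 2^{np}) α^{p−1} ‖f‖_{L¹} for p ∈ {1, 2}. -/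
open MeasureTheory ENNReal Set

noncomputable section

/-- `L^p` bound (`p ∈ {1,2}`) for the good part of the Calderón–Zygmund
decomposition at height `α`:  given closed cubes `Q k` with pairwise disjoint
interiors such that `|f| ≤ α` a.e. off `Ω = ⋃ Q k` and
`α < (1/|Q k|)∫_{Q k}|f| ≤ 2ⁿ α`, the function `g` equal to `f` off `Ω` and to the
average of `f` over `Q k` on the interior of each `Q k` satisfies
`‖g‖_{L^p}^p ≤ (1 + 2^{np}) α^{p-1} ‖f‖_{L¹}`. -/
theorem cz_good_part_bound (n : ℕ) (f g : (Fin n → ℝ) → ℝ)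
    (hf : Integrable f) (hg : Measurable g) (α : ℝ) (hα : 0 < α)
    (c : ℕ → Fin n → ℝ) (r : ℕ → ℝ) (hr : ∀ k, 0 < r k)
    (Q : ℕ → Set (Fin n → ℝ))
    (hQ : ∀ k, Q k = {x | ∀ i, |x i - c k i| ≤ r k})
    (hdisj : Pairwise (Function.onFun Disjoint fun k => interior (Q k)))
    (Ω : Set (Fin n → ℝ)) (hΩ : Ω = ⋃ k, Q k)
    (hsmall : ∀ᵐ x, x ∉ Ω → |f x| ≤ α)
    (havg : ∀ k,
      α < (volume (Q k)).toReal⁻¹ * ∫ x in Q k, |f x| ∧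
        (volume (Q k)).toReal⁻¹ * (∫ x in Q k, |f x|) ≤ 2 ^ n * α)
    (hg1 : ∀ x ∉ Ω, g x = f x)
    (hg2 : ∀ k, ∀ x ∈ interior (Q k),
      g x = (volume (Q k)).toReal⁻¹ * ∫ y in Q k, f y)
    (p : ℕ) (hp : p = 1 ∨ p = 2) :
    ∫⁻ x, ENNReal.ofReal (|g x| ^ p) ≤
      ENNReal.ofReal ((1 + 2 ^ (n * p)) * α ^ (p - 1) * ∫ x, |f x|) := by
  -- basic geometry of the cubes
  have hQcb : ∀ k, Q k = Metric.closedBall (c k) (r k) := by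
    intro k; rw [hQ k]; ext x
    simp [Metric.mem_closedBall, dist_pi_le_iff (hr k).le, Real.dist_eq]
  have hQclosed : ∀ k, IsClosed (Q k) := fun k => (hQcb k) ▸ Metric.isClosed_closedBall
  have hQmeas : ∀ k, MeasurableSet (Q k) := fun k => (hQclosed k).measurableSet
  have hQfront : ∀ k, volume (frontier (Q k)) = 0 := by
    intro k; rw [hQcb k, frontier_closedBall _ (hr k).ne']
    exact Measure.addHaar_sphere_of_ne_zero _ _ (hr k).ne'
  have hQne : ∀ k, volume (Q k) ≠ 0 := fun k => by
    rw [hQcb k]; exact (Metric.measure_closedBall_pos _ _ (hr k)).ne'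
  have hQlt : ∀ k, volume (Q k) ≠ ⊤ := fun k => by
    rw [hQcb k]; exact measure_closedBall_lt_top.ne
  have hΩmeas : MeasurableSet Ω := hΩ ▸ MeasurableSet.iUnion fun k => hQmeas k
  have hIm : ∀ k, MeasurableSet (interior (Q k)) := fun _ => isOpen_interior.measurableSet
  have htRpos : ∀ k, 0 < (volume (Q k)).toReal :=
    fun k => ENNReal.toReal_pos (hQne k) (hQlt k)
  have hintN : ∀ k, 0 ≤ ∫ x in Q k, |f x| := fun k => integral_nonneg fun x => abs_nonneg _
  -- the average is bounded in absolute value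
  have key1 : ∀ k, |(volume (Q k)).toReal⁻¹ * ∫ y in Q k, f y| ≤
      (volume (Q k)).toReal⁻¹ * ∫ y in Q k, |f y| := by
    intro k
    rw [abs_mul, abs_of_nonneg (inv_nonneg.mpr (htRpos k).le)]
    gcongr
    simpa [Real.norm_eq_abs] using norm_integral_le_integral_norm (μ := volume.restrict (Q k)) f
  have key2 : ∀ k, |(volume (Q k)).toReal⁻¹ * ∫ y in Q k, f y| ≤ 2 ^ n * α :=
    fun k => (key1 k).trans (havg k).2
  -- frontiers are a.e. avoided
  have hfr : ∀ᵐ x, x ∉ ⋃ k, frontier (Q k) :=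
    compl_mem_ae_iff.mpr (measure_iUnion_null fun k => hQfront k)
  -- a.e. off frontiers: points of Ω are in some interior
  have hint : ∀ x, x ∉ (⋃ k, frontier (Q k)) → x ∈ Ω → ∃ k, x ∈ interior (Q k) := by
    intro x hx hxΩ
    rw [hΩ] at hxΩ
    obtain ⟨k, hk⟩ := mem_iUnion.mp hxΩ
    refine ⟨k, ?_⟩
    by_contra h
    exact hx (mem_iUnion.mpr ⟨k, ⟨subset_closure hk, h⟩⟩)
  -- a.e. bound |g| ≤ 2^n * α
  have hbdd : ∀ᵐ x, |g x| ≤ 2 ^ n * α := by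
    filter_upwards [hsmall, hfr] with x hx1 hx2
    by_cases hxΩ : x ∈ Ω
    · obtain ⟨k, hk⟩ := hint x hx2 hxΩ
      rw [hg2 k x hk]; exact key2 k
    · rw [hg1 x hxΩ]
      exact (hx1 hxΩ).trans (le_mul_of_one_le_left hα.le (one_le_pow₀ one_le_two))
  -- L¹ bound: ∫⁻ |g| ≤ ∫⁻ |f|
  have hfabsInt : ∀ k, IntegrableOn (fun x => |f x|) (Q k) := fun k => hf.abs.integrableOn
  have hL1 : ∫⁻ x, ENNReal.ofReal |g x| ≤ ∫⁻ x, ENNReal.ofReal |f x| := by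
    rw [← lintegral_add_compl (fun x => ENNReal.ofReal |g x|) hΩmeas,
        ← lintegral_add_compl (fun x => ENNReal.ofReal |f x|) hΩmeas]
    refine add_le_add ?_ ?_
    · -- on Ω
      have hΩae : Ω =ᵐ[volume] ⋃ k, interior (Q k) := by
        have h1 : Ω \ (⋃ k, interior (Q k)) ⊆ ⋃ k, frontier (Q k) := by
          rintro x ⟨hx1, hx2⟩
          rw [hΩ] at hx1
          obtain ⟨k, hk⟩ := mem_iUnion.mp hx1
          exact mem_iUnion.mpr ⟨k, ⟨subset_closure hk,
            fun h => hx2 (mem_iUnion.mpr ⟨k, h⟩)⟩⟩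
        have h2 : (⋃ k, interior (Q k)) \ Ω = ∅ := by
          rw [diff_eq_empty]
          exact hΩ ▸ iUnion_mono fun k => interior_subset
        refine (MeasureTheory.measure_symmDiff_eq_zero_iff).mp ?_
        rw [Set.symmDiff_def]
        refine measure_union_null (measure_mono_null h1 (measure_iUnion_null fun k => hQfront k)) ?_
        rw [h2]; exact measure_empty
      rw [setLIntegral_congr hΩae, setLIntegral_congr hΩae,
          lintegral_iUnion hIm hdisj, lintegral_iUnion hIm hdisj]
      refine ENNReal.tsum_le_tsum fun k => ?_
      -- per cube: g is constant on the interior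
      have hQae : interior (Q k) =ᵐ[volume] Q k := by
        refine (MeasureTheory.measure_symmDiff_eq_zero_iff).mp
          (measure_mono_null ?_ (hQfront k))
        intro x hx
        rw [Set.mem_symmDiff] at hx
        rcases hx with ⟨hx1, hx2⟩ | ⟨hx1, hx2⟩
        · exact (hx2 (interior_subset hx1)).elim
        · exact ⟨subset_closure hx1, hx2⟩
      calc ∫⁻ x in interior (Q k), ENNReal.ofReal |g x|
          = ∫⁻ _ in interior (Q k),
              ENNReal.ofReal |(volume (Q k)).toReal⁻¹ * ∫ y in Q k, f y| := by
            refine setLIntegral_congr_fun (hIm k) (fun x hx => ?_)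
            rw [hg2 k x hx]
        _ = ENNReal.ofReal |(volume (Q k)).toReal⁻¹ * ∫ y in Q k, f y| * volume (interior (Q k)) :=
            setLIntegral_const _ _
        _ ≤ ENNReal.ofReal ((volume (Q k)).toReal⁻¹ * ∫ y in Q k, |f y|) * volume (Q k) :=
            mul_le_mul' (ENNReal.ofReal_le_ofReal (key1 k)) (measure_mono interior_subset)
        _ = ENNReal.ofReal ((volume (Q k)).toReal⁻¹ * ∫ y in Q k, |f y|) *
              ENNReal.ofReal (volume (Q k)).toReal := by
            rw [ENNReal.ofReal_toReal (hQlt k)]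
        _ = ENNReal.ofReal (∫ y in Q k, |f y|) := by
            rw [← ENNReal.ofReal_mul (by positivity)]
            congr 1
            rw [mul_comm ((volume (Q k)).toReal⁻¹) _, mul_assoc,
              inv_mul_cancel₀ (htRpos k).ne', mul_one]
        _ = ∫⁻ y in Q k, ENNReal.ofReal |f y| := by
            rw [ofReal_integral_eq_lintegral_ofReal (hfabsInt k)
              (ae_of_all _ fun x => abs_nonneg _)]
        _ = ∫⁻ y in interior (Q k), ENNReal.ofReal |f y| := (setLIntegral_congr hQae).symm
    · -- off Ω
      refine le_of_eq (setLIntegral_congr_fun hΩmeas.compl (fun x hx => ?_))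
      rw [hg1 x hx]
  have hL1' : ∫⁻ x, ENNReal.ofReal |g x| ≤ ENNReal.ofReal (∫ x, |f x|) := by
    rw [ofReal_integral_eq_lintegral_ofReal hf.abs (ae_of_all _ fun x => abs_nonneg _)]
    exact hL1
  have hfInt0 : 0 ≤ ∫ x, |f x| := integral_nonneg fun x => abs_nonneg _
  rcases hp with hp | hp
  · subst hp
    simp only [pow_one, mul_one, Nat.sub_self, pow_zero]
    calc ∫⁻ x, ENNReal.ofReal |g x| ≤ ENNReal.ofReal (∫ x, |f x|) := hL1'
      _ ≤ ENNReal.ofReal ((1 + 2 ^ n) * ∫ x, |f x|) := by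
          refine ENNReal.ofReal_le_ofReal ?_
          nlinarith [pow_pos (zero_lt_two (α := ℝ)) n]
  · subst hp
    have step1 : ∫⁻ x, ENNReal.ofReal (|g x| ^ 2) ≤
        ∫⁻ x, ENNReal.ofReal (2 ^ n * α) * ENNReal.ofReal |g x| := by
      refine lintegral_mono_ae ?_
      filter_upwards [hbdd] with x hx
      rw [← ENNReal.ofReal_mul (by positivity)]
      refine ENNReal.ofReal_le_ofReal ?_
      nlinarith [abs_nonneg (g x)]
    calc ∫⁻ x, ENNReal.ofReal (|g x| ^ 2)
        ≤ ∫⁻ x, ENNReal.ofReal (2 ^ n * α) * ENNReal.ofReal |g x| := step1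
      _ = ENNReal.ofReal (2 ^ n * α) * ∫⁻ x, ENNReal.ofReal |g x| :=
          lintegral_const_mul' _ _ ENNReal.ofReal_ne_top
      _ ≤ ENNReal.ofReal (2 ^ n * α) * ENNReal.ofReal (∫ x, |f x|) := by gcongr
      _ = ENNReal.ofReal ((2 ^ n * α) * ∫ x, |f x|) := by
          rw [← ENNReal.ofReal_mul (by positivity)]
      _ ≤ ENNReal.ofReal ((1 + 2 ^ (n * 2)) * α ^ (2 - 1) * ∫ x, |f x|) := by
          refine ENNReal.ofReal_le_ofReal ?_
          have h2n : (2 : ℝ) ^ n ≤ 1 + 2 ^ (n * 2) := by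
            have : (2 : ℝ) ^ n ≤ 2 ^ (n * 2) := by
              refine pow_le_pow_right₀ one_le_two ?_; omega
            linarith
          norm_num
          exact mul_le_mul_of_nonneg_right (mul_le_mul_of_nonneg_right h2n hα.le) hfInt0
end
end

section
/- Hörmander-type kernel estimate: for the vector kernel K(z) = (1/(π ω_{n-1})) z/|z|^{n+1} on ℝⁿ (n ≥ 2), there is a constant C_n such that for every y ∈ ℝⁿ \ {0}, ∫_{|x| ≥ 2|y|} |K(x − y) − K(x)| dx ≤ C_n. -/
open MeasureTheory ENNReal Set

noncomputable section

lemma abs_pow_sub_pow_le' (k : ℕ) {t s M : ℝ} (ht : 0 ≤ t) (hs : 0 ≤ s)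
    (htM : t ≤ M) (hsM : s ≤ M) :
    |t ^ k - s ^ k| ≤ k * M ^ (k - 1) * |t - s| := by
  have hM : 0 ≤ M := ht.trans htM
  rw [← geom_sum₂_mul, abs_mul]
  gcongr
  calc |∑ i ∈ Finset.range k, t ^ i * s ^ (k - 1 - i)|
      ≤ ∑ i ∈ Finset.range k, |t ^ i * s ^ (k - 1 - i)| := Finset.abs_sum_le_sum_abs _ _
    _ ≤ ∑ i ∈ Finset.range k, M ^ (k - 1) := by
        apply Finset.sum_le_sum
        intro i hi
        rw [Finset.mem_range] at hi
        rw [abs_mul, abs_pow, abs_pow, abs_of_nonneg ht, abs_of_nonneg hs]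
        calc t ^ i * s ^ (k - 1 - i) ≤ M ^ i * M ^ (k - 1 - i) := by
              gcongr
          _ = M ^ (k - 1) := by rw [← pow_add]; congr 1; omega
    _ = k * M ^ (k - 1) := by rw [Finset.sum_const, Finset.card_range, nsmul_eq_mul]

lemma key_ineq (n : ℕ) {R s t : ℝ} (hR : 0 < R) (hs : 2 * R ≤ s)
    (ht1 : s - R ≤ t) (ht2 : t ≤ s + R) :
    (t ^ (n + 1))⁻¹ * R + |(t ^ (n + 1))⁻¹ - (s ^ (n + 1))⁻¹| * s ≤
      (2 ^ (n + 1) + 2 * (n + 1) * 3 ^ n) * (R / s ^ (n + 1)) := by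
  have hs0 : 0 < s := lt_of_lt_of_le (by linarith) hs
  have hRs : R ≤ s / 2 := by linarith
  have hts : s / 2 ≤ t := by linarith
  have ht0 : 0 < t := lt_of_lt_of_le (by linarith) hts
  have hsk : 0 < s ^ (n + 1) := pow_pos hs0 _
  have htk : 0 < t ^ (n + 1) := pow_pos ht0 _
  have hinv : (t ^ (n + 1))⁻¹ ≤ 2 ^ (n + 1) / s ^ (n + 1) := by
    have h1 : (s / 2) ^ (n + 1) ≤ t ^ (n + 1) :=
      pow_le_pow_left₀ (by positivity) (by linarith) _
    calc (t ^ (n + 1))⁻¹ ≤ ((s / 2) ^ (n + 1))⁻¹ :=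
          inv_anti₀ (by positivity) h1
      _ = 2 ^ (n + 1) / s ^ (n + 1) := by rw [div_pow, inv_div]
  have hM : |t ^ (n + 1) - s ^ (n + 1)| ≤ (n + 1) * (3 / 2 * s) ^ n * R := by
    have := abs_pow_sub_pow_le' (n + 1) (t := t) (s := s) (M := 3 / 2 * s)
      ht0.le hs0.le (by linarith) (by linarith)
    simp only [Nat.add_sub_cancel] at this
    calc |t ^ (n + 1) - s ^ (n + 1)| ≤ (n + 1) * (3 / 2 * s) ^ n * |t - s| := by
          exact_mod_cast this
      _ ≤ (n + 1) * (3 / 2 * s) ^ n * R := by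
          have habs : |t - s| ≤ R := by rw [abs_sub_le_iff]; constructor <;> linarith
          have hpos : (0:ℝ) ≤ (n + 1) * (3 / 2 * s) ^ n := by positivity
          exact mul_le_mul_of_nonneg_left habs hpos
  have hterm1 : (t ^ (n + 1))⁻¹ * R ≤ 2 ^ (n + 1) * (R / s ^ (n + 1)) := by
    calc (t ^ (n + 1))⁻¹ * R ≤ (2 ^ (n + 1) / s ^ (n + 1)) * R := by gcongr
      _ = 2 ^ (n + 1) * (R / s ^ (n + 1)) := by ring
  have hterm2 : |(t ^ (n + 1))⁻¹ - (s ^ (n + 1))⁻¹| * s ≤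
      (2 * (n + 1) * 3 ^ n) * (R / s ^ (n + 1)) := by
    have hid : (t ^ (n + 1))⁻¹ - (s ^ (n + 1))⁻¹ =
        (s ^ (n + 1) - t ^ (n + 1)) / (t ^ (n + 1) * s ^ (n + 1)) :=
      inv_sub_inv htk.ne' hsk.ne'
    rw [hid, abs_div, abs_of_pos (mul_pos htk hsk), abs_sub_comm]
    have h2 : |t ^ (n + 1) - s ^ (n + 1)| / (t ^ (n + 1) * s ^ (n + 1)) * s ≤
        ((n + 1) * (3 / 2 * s) ^ n * R) * ((2 ^ (n + 1) / s ^ (n + 1)) * (s ^ (n + 1))⁻¹) * s := by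
      rw [div_eq_mul_inv, mul_inv]
      have hd : (t ^ (n + 1))⁻¹ * (s ^ (n + 1))⁻¹ ≤
          2 ^ (n + 1) / s ^ (n + 1) * (s ^ (n + 1))⁻¹ := by gcongr
      have := mul_le_mul hM hd (by positivity) (by positivity)
      exact mul_le_mul_of_nonneg_right this hs0.le
    refine h2.trans (le_of_eq ?_)
    have hexp : (3 / 2 * s) ^ n = (3 / 2 : ℝ) ^ n * s ^ n := mul_pow _ _ _
    have h32 : (3 / 2 : ℝ) ^ n * 2 ^ (n + 1) = 2 * 3 ^ n := by
      rw [div_pow, pow_succ]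
      field_simp
    rw [hexp]
    field_simp
    rw [pow_succ 2 n, pow_succ s n]
    linear_combination (s * s ^ n) * h32
  calc (t ^ (n + 1))⁻¹ * R + |(t ^ (n + 1))⁻¹ - (s ^ (n + 1))⁻¹| * s
      ≤ 2 ^ (n + 1) * (R / s ^ (n + 1)) + (2 * (n + 1) * 3 ^ n) * (R / s ^ (n + 1)) :=
        add_le_add hterm1 hterm2
    _ = (2 ^ (n + 1) + 2 * (n + 1) * 3 ^ n) * (R / s ^ (n + 1)) := by ring

/-- The Riesz kernel `K(z) = (1/(π ω_{n-1})) z/|z|^{n+1}` on `ℝⁿ`, where `ω_{n-1}` is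
the volume of the unit ball in `ℝ^{n-1}`. -/
def rieszKernel (n : ℕ) (z : EuclideanSpace ℝ (Fin n)) : EuclideanSpace ℝ (Fin n) :=
  (Real.pi * (volume (Metric.ball (0 : EuclideanSpace ℝ (Fin (n - 1))) 1)).toReal)⁻¹ •
    (‖z‖ ^ (n + 1))⁻¹ • z

lemma riesz_pointwise (n : ℕ) (y x : EuclideanSpace ℝ (Fin n)) (hy : y ≠ 0)
    (hx : 2 * ‖y‖ ≤ ‖x‖) :
    ‖rieszKernel n (x - y) - rieszKernel n x‖ ≤
      ((Real.pi * (volume (Metric.ball (0 : EuclideanSpace ℝ (Fin (n - 1))) 1)).toReal)⁻¹ *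
        (2 ^ (n + 1) + 2 * (n + 1) * 3 ^ n)) * (‖y‖ / ‖x‖ ^ (n + 1)) := by
  set c : ℝ :=
    (Real.pi * (volume (Metric.ball (0 : EuclideanSpace ℝ (Fin (n - 1))) 1)).toReal)⁻¹ with hc
  have hc0 : 0 ≤ c := by
    rw [hc]
    positivity
  have hR : 0 < ‖y‖ := norm_pos_iff.2 hy
  set A : ℝ := (‖x - y‖ ^ (n + 1))⁻¹ with hA
  set B : ℝ := (‖x‖ ^ (n + 1))⁻¹ with hB
  have hdiff : rieszKernel n (x - y) - rieszKernel n x = c • (A • (x - y) - B • x) := by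
    rw [rieszKernel, rieszKernel, ← smul_sub]
  have hsplit : A • (x - y) - B • x = A • (-y) + (A - B) • x := by
    module
  have hnorm : ‖A • (x - y) - B • x‖ ≤ A * ‖y‖ + |A - B| * ‖x‖ := by
    rw [hsplit]
    calc ‖A • (-y) + (A - B) • x‖ ≤ ‖A • (-y)‖ + ‖(A - B) • x‖ := norm_add_le _ _
      _ = |A| * ‖y‖ + |A - B| * ‖x‖ := by
          rw [norm_smul, norm_smul, norm_neg, Real.norm_eq_abs, Real.norm_eq_abs]
      _ = A * ‖y‖ + |A - B| * ‖x‖ := by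
          rw [abs_of_nonneg (by positivity)]
  have hkey : A * ‖y‖ + |A - B| * ‖x‖ ≤
      (2 ^ (n + 1) + 2 * (n + 1) * 3 ^ n) * (‖y‖ / ‖x‖ ^ (n + 1)) := by
    have ht1 : ‖x‖ - ‖y‖ ≤ ‖x - y‖ := norm_sub_norm_le x y
    have ht2 : ‖x - y‖ ≤ ‖x‖ + ‖y‖ := norm_sub_le x y
    exact key_ineq n hR hx ht1 ht2
  calc ‖rieszKernel n (x - y) - rieszKernel n x‖ = c * ‖A • (x - y) - B • x‖ := by
        rw [hdiff, norm_smul, Real.norm_eq_abs, abs_of_nonneg hc0]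
    _ ≤ c * ((2 ^ (n + 1) + 2 * (n + 1) * 3 ^ n) * (‖y‖ / ‖x‖ ^ (n + 1))) :=
        mul_le_mul_of_nonneg_left (hnorm.trans hkey) hc0
    _ = _ := by ring

lemma scaling_lintegral (n : ℕ) (f : EuclideanSpace ℝ (Fin n) → ℝ≥0∞) (hf : Measurable f)
    {R : ℝ} (hR : 0 < R) :
    ∫⁻ x, f x = ENNReal.ofReal (R ^ n) * ∫⁻ x, f (R • x) := by
  have hmap : Measure.map (R • · : EuclideanSpace ℝ (Fin n) → EuclideanSpace ℝ (Fin n)) volume =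
      ENNReal.ofReal |(R ^ n)⁻¹| • (volume : Measure (EuclideanSpace ℝ (Fin n))) := by
    have := Measure.map_addHaar_smul (volume : Measure (EuclideanSpace ℝ (Fin n))) hR.ne'
    rwa [finrank_euclideanSpace_fin] at this
  have h1 : ∫⁻ x, f (R • x) = ENNReal.ofReal |(R ^ n)⁻¹| * ∫⁻ x, f x := by
    rw [← lintegral_map hf (measurable_const_smul R), hmap, lintegral_smul_measure, smul_eq_mul]
  rw [h1, ← mul_assoc, ← ENNReal.ofReal_mul (by positivity),
    abs_of_pos (by positivity), mul_inv_cancel₀ (by positivity), ENNReal.ofReal_one, one_mul]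

/-- Hörmander-type kernel estimate: for `n ≥ 2` there is `C_n` such
that for every `y ≠ 0`, `∫_{|x| ≥ 2|y|} |K(x-y) - K(x)| dx ≤ C_n`. -/
theorem riesz_kernel_hormander (n : ℕ) (hn : 2 ≤ n) :
    ∃ C : ℝ, 0 < C ∧
      ∀ y : EuclideanSpace ℝ (Fin n), y ≠ 0 →
        ∫⁻ x in {x : EuclideanSpace ℝ (Fin n) | 2 * ‖y‖ ≤ ‖x‖},
            ENNReal.ofReal ‖rieszKernel n (x - y) - rieszKernel n x‖ ≤
          ENNReal.ofReal C := by
  set c : ℝ :=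
    (Real.pi * (volume (Metric.ball (0 : EuclideanSpace ℝ (Fin (n - 1))) 1)).toReal)⁻¹ with hc
  have hc0 : 0 ≤ c := by rw [hc]; positivity
  set M : ℝ := c * (2 ^ (n + 1) + 2 * (n + 1) * 3 ^ n) with hMdef
  have hM0 : 0 ≤ M := by
    apply mul_nonneg hc0
    positivity
  set g : EuclideanSpace ℝ (Fin n) → ℝ≥0∞ := fun x => ENNReal.ofReal ((‖x‖ ^ (n + 1))⁻¹)
    with hg
  have hgm : Measurable g := (measurable_norm.pow_const (n + 1)).inv.ennreal_ofReal
  set S₂ : Set (EuclideanSpace ℝ (Fin n)) := {x | (2 : ℝ) ≤ ‖x‖} with hS₂def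
  have hS₂ : MeasurableSet S₂ := (isClosed_le continuous_const continuous_norm).measurableSet
  set I : ℝ≥0∞ := ∫⁻ x in S₂, g x with hI
  -- I is finite
  have hIfin : I < ⊤ := by
    have hbound : ∀ x ∈ S₂, g x ≤
        ENNReal.ofReal ((3 / 2 : ℝ) ^ (n + 1)) *
          ENNReal.ofReal ((1 + ‖x‖) ^ (-((n : ℝ) + 1))) := by
      intro x hx
      have hx2 : (2 : ℝ) ≤ ‖x‖ := hx
      have hx0 : (0 : ℝ) < ‖x‖ := by linarith
      have h1x : (0 : ℝ) < 1 + ‖x‖ := by linarith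
      have hrw : (1 + ‖x‖) ^ (-((n : ℝ) + 1)) = ((1 + ‖x‖) ^ (n + 1))⁻¹ := by
        rw [← Real.rpow_natCast (1 + ‖x‖) (n + 1), ← Real.rpow_neg h1x.le]
        norm_num
      rw [hg, ← ENNReal.ofReal_mul (by positivity), hrw]
      apply ENNReal.ofReal_le_ofReal
      have hp : (1 + ‖x‖) ^ (n + 1) ≤ (3 / 2 : ℝ) ^ (n + 1) * ‖x‖ ^ (n + 1) := by
        rw [← mul_pow]
        apply pow_le_pow_left₀ (by positivity)
        linarith
      have h3 : (‖x‖ ^ (n + 1))⁻¹ * (1 + ‖x‖) ^ (n + 1) ≤ (3 / 2 : ℝ) ^ (n + 1) :=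
        calc (‖x‖ ^ (n + 1))⁻¹ * (1 + ‖x‖) ^ (n + 1)
            ≤ (‖x‖ ^ (n + 1))⁻¹ * ((3 / 2 : ℝ) ^ (n + 1) * ‖x‖ ^ (n + 1)) :=
              mul_le_mul_of_nonneg_left hp (by positivity)
          _ = (3 / 2 : ℝ) ^ (n + 1) := by field_simp
      rw [← div_eq_mul_inv, le_div_iff₀ (by positivity)]
      exact h3
    calc I ≤ ∫⁻ x in S₂, ENNReal.ofReal ((3 / 2 : ℝ) ^ (n + 1)) *
          ENNReal.ofReal ((1 + ‖x‖) ^ (-((n : ℝ) + 1))) := setLIntegral_mono' hS₂ hbound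
      _ ≤ ∫⁻ x, ENNReal.ofReal ((3 / 2 : ℝ) ^ (n + 1)) *
          ENNReal.ofReal ((1 + ‖x‖) ^ (-((n : ℝ) + 1))) := setLIntegral_le_lintegral _ _
      _ = ENNReal.ofReal ((3 / 2 : ℝ) ^ (n + 1)) *
          ∫⁻ x, ENNReal.ofReal ((1 + ‖x‖) ^ (-((n : ℝ) + 1))) :=
            lintegral_const_mul' _ _ ENNReal.ofReal_ne_top
      _ < ⊤ := by
          apply ENNReal.mul_lt_top ENNReal.ofReal_lt_top
          apply finite_integral_one_add_norm
          rw [finrank_euclideanSpace_fin]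
          norm_num
  -- the constant
  refine ⟨M * I.toReal + 1, by positivity, fun y hy => ?_⟩
  have hR : 0 < ‖y‖ := norm_pos_iff.2 hy
  set R : ℝ := ‖y‖ with hRdef
  set S : Set (EuclideanSpace ℝ (Fin n)) := {x | 2 * R ≤ ‖x‖} with hSdef
  have hS : MeasurableSet S := (isClosed_le continuous_const continuous_norm).measurableSet
  -- step 1 : pointwise domination
  have step1 : ∫⁻ x in S, ENNReal.ofReal ‖rieszKernel n (x - y) - rieszKernel n x‖ ≤
      ∫⁻ x in S, ENNReal.ofReal (M * R) * g x := by
    apply setLIntegral_mono' hS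
    intro x hx
    rw [hg, ← ENNReal.ofReal_mul (by positivity)]
    apply ENNReal.ofReal_le_ofReal
    calc ‖rieszKernel n (x - y) - rieszKernel n x‖
        ≤ (c * (2 ^ (n + 1) + 2 * (n + 1) * 3 ^ n)) * (R / ‖x‖ ^ (n + 1)) :=
          riesz_pointwise n y x hy hx
      _ = M * R * (‖x‖ ^ (n + 1))⁻¹ := by rw [hMdef]; ring
  -- step 2 : pull out the constant
  have step2 : ∫⁻ x in S, ENNReal.ofReal (M * R) * g x =
      ENNReal.ofReal (M * R) * ∫⁻ x in S, g x :=
    lintegral_const_mul' _ _ ENNReal.ofReal_ne_top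
  -- step 3 : scaling
  have step3 : ∫⁻ x in S, g x = ENNReal.ofReal R⁻¹ * I := by
    have hind : ∫⁻ x in S, g x = ∫⁻ x, S.indicator g x := (lintegral_indicator hS g).symm
    have hscale := scaling_lintegral n (S.indicator g) (hgm.indicator hS) hR
    have hcomp : (fun x => S.indicator g (R • x)) =
        fun x => ENNReal.ofReal ((R ^ (n + 1))⁻¹) * S₂.indicator g x := by
      funext x
      have hns : ‖R • x‖ = R * ‖x‖ := by
        rw [norm_smul, Real.norm_eq_abs, abs_of_pos hR]
      by_cases h : (2 : ℝ) ≤ ‖x‖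
      · have hmem : R • x ∈ S := by
          show 2 * R ≤ ‖R • x‖
          rw [hns]
          calc 2 * R = R * 2 := by ring
            _ ≤ R * ‖x‖ := by
                apply mul_le_mul_of_nonneg_left h hR.le
        have hx₂ : x ∈ S₂ := h
        rw [Set.indicator_of_mem hmem, Set.indicator_of_mem hx₂, hg]
        simp only
        rw [← ENNReal.ofReal_mul (by positivity), hns, mul_pow, mul_inv]
      · have hmem : R • x ∉ S := by
          show ¬ 2 * R ≤ ‖R • x‖
          rw [hns]
          intro hcon
          apply h
          nlinarith
        have hx₂ : x ∉ S₂ := h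
        rw [Set.indicator_of_notMem hmem, Set.indicator_of_notMem hx₂, mul_zero]
    rw [hcomp] at hscale
    rw [lintegral_const_mul' _ _ ENNReal.ofReal_ne_top, lintegral_indicator hS₂, ← hI] at hscale
    rw [hind, hscale, ← mul_assoc, ← ENNReal.ofReal_mul (by positivity)]
    congr 2
    rw [pow_succ]
    field_simp
  -- combine
  calc ∫⁻ x in S, ENNReal.ofReal ‖rieszKernel n (x - y) - rieszKernel n x‖
      ≤ ENNReal.ofReal (M * R) * (ENNReal.ofReal R⁻¹ * I) := by
        rw [← step3, ← step2]; exact step1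
    _ = ENNReal.ofReal M * I := by
        rw [← mul_assoc, ← ENNReal.ofReal_mul (by positivity), mul_assoc,
          mul_inv_cancel₀ hR.ne', mul_one]
    _ = ENNReal.ofReal (M * I.toReal) := by
        rw [← ENNReal.ofReal_toReal hIfin.ne, ← ENNReal.ofReal_mul hM0,
          ENNReal.toReal_ofReal (ENNReal.toReal_nonneg)]
    _ ≤ ENNReal.ofReal (M * I.toReal + 1) := by
        apply ENNReal.ofReal_le_ofReal
        linarith
end
end
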